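/- arXiv:2211.07163 — 9 statements merged into one kernel-verified Lean document; each statement's English description precedes it below -/
import Mathlib

section
/- If L is a dcpo which is a sup semilattice, then the strong way-below relation coincides with the way-below relation: x ≪_s y if and only if x ≪ y. -/
open Set

variable {L : Type*}

/-- A directed subset: nonempty and directed under `≤`. -/
def DirSet [Preorder L] (D : Set L) : Prop := D.Nonempty ∧ DirectedOn (· ≤ ·) D

/-- Strongly Scott open sets (the family `σ^s(L)`). -/
def StronglyScottOpen [Preorder L] [SupSet L] (U : Set L) : Prop :=
  IsUpperSet U ∧ ∀ D : Set L, DirSet D → ∀ x : L,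
    Ici (sSup D) ∩ Ici x ⊆ U → ∃ d ∈ D, Ici d ∩ Ici x ⊆ U

/-- The strong Scott topology `σ_s(L)`, generated by the strongly Scott open sets. -/
def strongScott (L : Type*) [Preorder L] [SupSet L] : TopologicalSpace L :=
  TopologicalSpace.generateFrom {U | StronglyScottOpen U}

/-- Scott open sets. -/
def ScottOpen [Preorder L] [SupSet L] (U : Set L) : Prop :=
  IsUpperSet U ∧ ∀ D : Set L, DirSet D → sSup D ∈ U → (D ∩ U).Nonempty

/-- The Scott topology `σ(L)`. -/
def scottTop (L : Type*) [Preorder L] [SupSet L] : TopologicalSpace L :=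
  TopologicalSpace.generateFrom {U | ScottOpen U}

/-- The upper topology `υ(L)`. -/
def upperTop (L : Type*) [Preorder L] : TopologicalSpace L :=
  TopologicalSpace.generateFrom {U | ∃ x : L, U = (Iic x)ᶜ}

/-- The lower topology `ω(L)`. -/
def lowerTop (L : Type*) [Preorder L] : TopologicalSpace L :=
  TopologicalSpace.generateFrom {U | ∃ x : L, U = (Ici x)ᶜ}

/-- The strong way-below relation `x ≪_s y`. -/
def SWayBelow [Preorder L] (x y : L) : Prop :=
  ∀ D : Set L, DirSet D → ∀ a : L,
    (⋂ d ∈ D, Ici d) ∩ Ici a ⊆ Ici y → ∃ d ∈ D, Ici d ∩ Ici a ⊆ Ici x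

/-- The way-below relation `x ≪ y`. -/
def WayBelow [Preorder L] [SupSet L] (x y : L) : Prop :=
  ∀ D : Set L, DirSet D → y ≤ sSup D → ∃ d ∈ D, x ≤ d

/-- `X` with topology `t` is a C-space (w.r.t. the order of `L`). -/
def IsCSpace [Preorder L] (t : TopologicalSpace L) : Prop :=
  ∀ U : Set L, @IsOpen _ (t) U → ∀ x ∈ U, ∃ y ∈ U,
    x ∈ @interior L t (Ici y) ∧ Ici y ⊆ U

/-- `L` is a strongly continuous domain. -/
def StronglyContinuousDomain (L : Type*) [Preorder L] [SupSet L] : Prop :=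
  IsCSpace (strongScott L)

/-- `L` is a continuous domain. -/
def ContinuousDomain (L : Type*) [Preorder L] [SupSet L] : Prop :=
  ∀ x : L, DirSet {y | WayBelow y x} ∧ IsLUB {y | WayBelow y x} x

/-- `L` is a hypercontinuous domain. -/
def HypercontinuousDomain (L : Type*) [Preorder L] : Prop :=
  ∀ x : L, DirSet {y | x ∈ @interior L (upperTop L) (Ici y)} ∧
    IsLUB {y | x ∈ @interior L (upperTop L) (Ici y)} x

/-- The strong Lawson topology `λ_s(L)`: common refinement of `σ_s(L)` and `ω(L)`. -/
def strongLawson (L : Type*) [Preorder L] [SupSet L] : TopologicalSpace L :=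
  TopologicalSpace.generateFrom
    {U | @IsOpen _ (strongScott L) U ∨ @IsOpen _ (lowerTop L) U}

theorem sWayBelow_iff_wayBelow_of_supSemilattice [CompletePartialOrder L]
    (hsup : ∀ a b : L, ∃ c : L, IsLUB {a, b} c) (x y : L) :
    SWayBelow x y ↔ WayBelow x y := by
  constructor
  · intro h D hD hy
    obtain ⟨a, ha⟩ := hD.1
    have hlub := CompletePartialOrder.lubOfDirected D hD.2
    have hsub : (⋂ d ∈ D, Ici d) ∩ Ici a ⊆ Ici y := by
      rintro z ⟨hz1, _⟩
      simp only [mem_iInter, mem_Ici] at hz1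
      exact le_trans hy (hlub.2 fun d hd => hz1 d hd)
    obtain ⟨d, hd, hdx⟩ := h D hD a hsub
    obtain ⟨e, he, hed, hea⟩ := hD.2 d hd a ha
    exact ⟨e, he, hdx ⟨hed, hea⟩⟩
  · intro h D hD a hsub
    choose f hf using fun d : L => hsup d a
    set D' := f '' D with hD'
    have hfd : ∀ d, d ≤ f d := fun d => (hf d).1 (by simp)
    have hfa : ∀ d, a ≤ f d := fun d => (hf d).1 (by simp)
    have hmono : ∀ d e, d ≤ e → f d ≤ f e := fun d e hde =>
      (hf d).2 (by rintro w (rfl | rfl); exacts [le_trans hde (hfd e), hfa e])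
    have hdir : DirSet D' := by
      obtain ⟨d0, hd0⟩ := hD.1
      refine ⟨⟨f d0, ⟨d0, hd0, rfl⟩⟩, ?_⟩
      rintro _ ⟨d1, hd1, rfl⟩ _ ⟨d2, hd2, rfl⟩
      obtain ⟨d3, hd3, h13, h23⟩ := hD.2 d1 hd1 d2 hd2
      exact ⟨f d3, ⟨d3, hd3, rfl⟩, hmono _ _ h13, hmono _ _ h23⟩
    have hlub := CompletePartialOrder.lubOfDirected D' hdir.2
    have hy : y ≤ sSup D' := by
      apply hsub
      constructor
      · simp only [mem_iInter, mem_Ici]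
        intro d hd
        exact le_trans (hfd d) (hlub.1 ⟨d, hd, rfl⟩)
      · obtain ⟨d0, hd0⟩ := hD.1
        exact le_trans (hfa d0) (hlub.1 ⟨d0, hd0, rfl⟩)
    obtain ⟨_, ⟨d, hd, rfl⟩, hxd⟩ := h D' hdir hy
    refine ⟨d, hd, fun z hz => ?_⟩
    have hfz : f d ≤ z := (hf d).2 (by rintro w (rfl | rfl); exacts [hz.1, hz.2])
    exact le_trans hxd hfz
end

section
/- Let L be a dcpo and x ∈ L. If there exists a directed set D ⊆ ⇓_s x (the set of elements strongly way-below x) with sup D = x, then ⇓_s x is directed and sup ⇓_s x = x. -/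
open Set

variable {L : Type*}

theorem sWayBelow_directed_of_exists [CompletePartialOrder L] (x : L)
    (D : Set L) (hD : DirSet D) (hsub : D ⊆ {y | SWayBelow y x})
    (hlub : IsLUB D x) :
    DirSet {y | SWayBelow y x} ∧ IsLUB {y | SWayBelow y x} x := by
  obtain ⟨⟨a0, ha0⟩, hdir⟩ := hD
  -- key: every y strongly way-below x is below some element of D
  have key : ∀ y : L, SWayBelow y x → ∃ d ∈ D, y ≤ d := by
    intro y hy
    have hsubx : (⋂ d ∈ D, Ici d) ∩ Ici a0 ⊆ Ici x := by
      intro z hz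
      have hub : z ∈ upperBounds D := by
        intro d hd
        exact (Set.mem_iInter₂.mp hz.1) d hd
      exact hlub.2 hub
    obtain ⟨d1, hd1, hsub1⟩ := hy D ⟨⟨a0, ha0⟩, hdir⟩ a0 hsubx
    obtain ⟨d, hd, hd1d, ha0d⟩ := hdir d1 hd1 a0 ha0
    exact ⟨d, hd, hsub1 ⟨hd1d, ha0d⟩⟩
  constructor
  · refine ⟨⟨a0, hsub ha0⟩, ?_⟩
    intro y1 hy1 y2 hy2
    obtain ⟨d1, hd1, h1⟩ := key y1 hy1
    obtain ⟨d2, hd2, h2⟩ := key y2 hy2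
    obtain ⟨d, hd, hle1, hle2⟩ := hdir d1 hd1 d2 hd2
    exact ⟨d, hsub hd, h1.trans hle1, h2.trans hle2⟩
  · constructor
    · intro y hy
      obtain ⟨d, hd, hyd⟩ := key y hy
      exact hyd.trans (hlub.1 hd)
    · intro z hz
      exact hlub.2 fun d hd => hz (hsub hd)
end

section
/- A dcpo L is a strongly continuous domain (i.e., (L, σ_s(L)) is a C-space) if and only if for every x ∈ L, the set ⇓_s x is directed, x = sup ⇓_s x, and ⇑_s x is strong Scott topology open. -/
open Set

variable {L : Type*}

section Aux
variable [CompletePartialOrder L]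

lemma sso_univ : StronglyScottOpen (univ : Set L) :=
  ⟨isUpperSet_univ, fun D hD _ _ => ⟨hD.1.choose, hD.1.choose_spec, by simp⟩⟩

lemma sso_inter {U V : Set L} (hU : StronglyScottOpen U) (hV : StronglyScottOpen V) :
    StronglyScottOpen (U ∩ V) := by
  refine ⟨hU.1.inter hV.1, fun D hD x h => ?_⟩
  obtain ⟨d1, hd1, h1⟩ := hU.2 D hD x (h.trans inter_subset_left)
  obtain ⟨d2, hd2, h2⟩ := hV.2 D hD x (h.trans inter_subset_right)
  obtain ⟨d, hd, hd1', hd2'⟩ := hD.2 d1 hd1 d2 hd2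
  exact ⟨d, hd, fun z hz => ⟨h1 ⟨le_trans hd1' hz.1, hz.2⟩, h2 ⟨le_trans hd2' hz.1, hz.2⟩⟩⟩

lemma sso_isOpen {U : Set L} (h : StronglyScottOpen U) : @IsOpen _ (strongScott L) U :=
  TopologicalSpace.GenerateOpen.basic U h

lemma open_basis {U : Set L} (h : @IsOpen _ (strongScott L) U) :
    ∀ x ∈ U, ∃ B, StronglyScottOpen B ∧ x ∈ B ∧ B ⊆ U := by
  have h' : TopologicalSpace.GenerateOpen {U | StronglyScottOpen U} U := h
  clear h
  induction h' with
  | basic V hV => exact fun x hx => ⟨V, hV, hx, subset_rfl⟩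
  | univ => exact fun x _ => ⟨univ, sso_univ, trivial, subset_rfl⟩
  | inter V W _ _ ihV ihW =>
      intro x hx
      obtain ⟨B1, h1, m1, s1⟩ := ihV x hx.1
      obtain ⟨B2, h2, m2, s2⟩ := ihW x hx.2
      exact ⟨B1 ∩ B2, sso_inter h1 h2, ⟨m1, m2⟩, inter_subset_inter s1 s2⟩
  | sUnion S _ ih =>
      rintro x ⟨V, hV, hxV⟩
      obtain ⟨B, hB, mB, sB⟩ := ih V hV x hxV
      exact ⟨B, hB, mB, sB.trans (subset_sUnion_of_mem hV)⟩

lemma biInter_Ici_eq {D : Set L} (hD : DirectedOn (· ≤ ·) D) :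
    (⋂ d ∈ D, Ici d) = Ici (sSup D) := by
  have h := CompletePartialOrder.lubOfDirected D hD
  ext z
  simp only [mem_iInter, mem_Ici]
  exact ⟨fun hz => h.2 hz, fun hz d hd => (h.1 hd).trans hz⟩

lemma csSup_empty_le (z : L) : sSup (∅ : Set L) ≤ z :=
  (CompletePartialOrder.lubOfDirected ∅ (fun a ha => ha.elim)).2 (fun b hb => hb.elim)

lemma Ici_sSup_empty : Ici (sSup (∅ : Set L)) = univ :=
  eq_univ_of_forall fun z => csSup_empty_le z

lemma sso_compl_Iic (c : L) : StronglyScottOpen ((Iic c)ᶜ : Set L) := by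
  constructor
  · intro a b hab ha hb
    exact ha (hab.trans hb)
  · intro D hD x h
    by_contra hcon
    push_neg at hcon
    have key : ∀ d ∈ D, ∃ z, d ≤ z ∧ x ≤ z ∧ z ≤ c := by
      intro d hd
      obtain ⟨z, hz1, hz2⟩ := not_subset.1 (hcon d hd)
      exact ⟨z, hz1.1, hz1.2, not_not.1 hz2⟩
    obtain ⟨d0, hd0⟩ := hD.1
    obtain ⟨z0, _, hxz0, hz0c⟩ := key d0 hd0
    have hsup : sSup D ≤ c :=
      (CompletePartialOrder.lubOfDirected D hD.2).2 (fun d hd => by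
        obtain ⟨z, hz1, _, hz3⟩ := key d hd
        exact hz1.trans hz3)
    exact (h ⟨hsup, hxz0.trans hz0c⟩) (le_refl c)

lemma sway_le {x y : L} (h : SWayBelow x y) : x ≤ y := by
  obtain ⟨d, hd, hsub⟩ := h {y}
    ⟨⟨y, rfl⟩, fun a ha b hb => ⟨y, rfl, le_of_eq (mem_singleton_iff.mp ha),
      le_of_eq (mem_singleton_iff.mp hb)⟩⟩ y (fun z hz => hz.2)
  exact hsub ⟨le_of_eq (mem_singleton_iff.mp hd), le_refl y⟩

lemma sway_of_mem_interior {x y : L} (h : x ∈ @interior L (strongScott L) (Ici y)) :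
    SWayBelow y x := by
  letI := strongScott L
  obtain ⟨B, hB, hxB, hBsub⟩ := open_basis isOpen_interior x h
  have hBIci : B ⊆ Ici y := hBsub.trans interior_subset
  intro D hD a hsub
  rw [biInter_Ici_eq hD.2] at hsub
  have hsub' : Ici (sSup D) ∩ Ici a ⊆ B := fun z hz => hB.1 (hsub hz) hxB
  obtain ⟨d, hd, hdsub⟩ := hB.2 D hD a hsub'
  exact ⟨d, hd, hdsub.trans hBIci⟩

end Aux

section Main
variable [CompletePartialOrder L]

lemma forward_lub (hC : StronglyContinuousDomain L) (x : L) :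
    DirSet {z | x ∈ @interior L (strongScott L) (Ici z)} ∧
      IsLUB {z | x ∈ @interior L (strongScott L) (Ici z)} x := by
  letI := strongScott L
  set Dx := {z : L | x ∈ interior (Ici z)} with hDx
  have hne : Dx.Nonempty := by
    obtain ⟨y, _, hy2, _⟩ := hC univ isOpen_univ x trivial
    exact ⟨y, hy2⟩
  have hdir : DirectedOn (· ≤ ·) Dx := by
    intro z1 hz1 z2 hz2
    obtain ⟨y, hyV, hy2, _⟩ := hC (interior (Ici z1) ∩ interior (Ici z2))
      (IsOpen.inter isOpen_interior isOpen_interior) x ⟨hz1, hz2⟩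
    exact ⟨y, hy2, interior_subset hyV.1, interior_subset hyV.2⟩
  have hub : x ∈ upperBounds Dx := fun z hz => interior_subset hz
  have hlub := CompletePartialOrder.lubOfDirected Dx hdir
  have hxle : x ≤ sSup Dx := by
    by_contra hxle
    obtain ⟨y, hyU, hy2, hy3⟩ := hC ((Iic (sSup Dx))ᶜ)
      (sso_isOpen (sso_compl_Iic _)) x hxle
    exact (hy3 (mem_Ici.2 (le_refl y))) (hlub.1 hy2)
  refine ⟨⟨hne, hdir⟩, hub, fun b hb => hxle.trans (hlub.2 hb)⟩

lemma forward_iff (hC : StronglyContinuousDomain L) (x y : L) :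
    SWayBelow y x ↔ x ∈ @interior L (strongScott L) (Ici y) := by
  letI := strongScott L
  refine ⟨fun h => ?_, sway_of_mem_interior⟩
  obtain ⟨hD, hlubx⟩ := forward_lub hC x
  set Dx := {z : L | x ∈ interior (Ici z)} with hDxdef
  have hsup : sSup Dx = x :=
    (CompletePartialOrder.lubOfDirected Dx hD.2).unique hlubx
  have hsub : (⋂ d ∈ Dx, Ici d) ∩ Ici (sSup (∅ : Set L)) ⊆ Ici x := by
    rw [biInter_Ici_eq hD.2, hsup]
    exact fun z hz => hz.1
  obtain ⟨d, hd, hdsub⟩ := h Dx hD (sSup (∅ : Set L)) hsub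
  have hIci : Ici d ⊆ Ici y := fun z hz => hdsub ⟨hz, csSup_empty_le z⟩
  exact interior_mono hIci hd

theorem stronglyContinuousDomain_iff' :
    StronglyContinuousDomain L ↔
      ∀ x : L, DirSet {y | SWayBelow y x} ∧ IsLUB {y | SWayBelow y x} x ∧
        @IsOpen _ (strongScott L) {y | SWayBelow x y} := by
  letI := strongScott L
  constructor
  · intro hC x
    have heq : {y : L | SWayBelow y x} = {z : L | x ∈ interior (Ici z)} := by
      ext z; exact forward_iff hC x z
    have heq2 : {y : L | SWayBelow x y} = interior (Ici x) := by
      ext y; exact forward_iff hC y x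
    obtain ⟨h1, h2⟩ := forward_lub hC x
    refine ⟨heq ▸ h1, heq ▸ h2, heq2 ▸ isOpen_interior⟩
  · intro h U hU x hx
    obtain ⟨B, hB, hxB, hBU⟩ := open_basis hU x hx
    obtain ⟨⟨hne, hdir⟩, hlub, hopen⟩ := h x
    set Dx := {y : L | SWayBelow y x} with hDxdef
    have hsup : sSup Dx = x :=
      (CompletePartialOrder.lubOfDirected Dx hdir).unique hlub
    have hsub : Ici (sSup Dx) ∩ Ici (sSup (∅ : Set L)) ⊆ B := by
      rw [hsup]
      exact fun z hz => hB.1 hz.1 hxB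
    obtain ⟨d, hd, hdsub⟩ := hB.2 Dx ⟨hne, hdir⟩ (sSup (∅ : Set L)) hsub
    have hIciB : Ici d ⊆ B := fun z hz => hdsub ⟨hz, csSup_empty_le z⟩
    refine ⟨d, hBU (hIciB (mem_Ici.2 (le_refl d))), ?_, hIciB.trans hBU⟩
    have hsubint : {y : L | SWayBelow d y} ⊆ Ici d := fun y hy => sway_le hy
    exact interior_maximal hsubint (h d).2.2 hd

end Main

theorem stronglyContinuousDomain_iff [CompletePartialOrder L] :
    StronglyContinuousDomain L ↔
      ∀ x : L, DirSet {y | SWayBelow y x} ∧ IsLUB {y | SWayBelow y x} x ∧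
        @IsOpen _ (strongScott L) {y | SWayBelow x y} := by
  
  exact stronglyContinuousDomain_iff'
end

section
/- A dcpo L is hypercontinuous if and only if L is strongly continuous and the upper topology equals the strong Scott topology: υ(L) = σ_s(L). -/
open Set

variable {L : Type*}

section Aux

variable [CompletePartialOrder L]

/-- Complements of principal ideals are strongly Scott open. -/
lemma stronglyScottOpen_compl_Iic (z : L) : StronglyScottOpen ((Iic z)ᶜ : Set L) := by
  constructor
  · intro a b hab ha hb
    exact ha (le_trans hab hb)
  · intro D hD x h
    by_contra hc
    push_neg at hc
    have hz : ∀ d ∈ D, d ≤ z ∧ x ≤ z := by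
      intro d hd
      obtain ⟨w, hw, hwz⟩ := not_subset.mp (hc d hd)
      have hwz' : w ≤ z := not_not.mp hwz
      exact ⟨le_trans hw.1 hwz', le_trans hw.2 hwz'⟩
    have hub : z ∈ upperBounds D := fun d hd => (hz d hd).1
    obtain ⟨a, ha⟩ := hD.1
    have hxz : x ≤ z := (hz a ha).2
    have hsz : sSup D ≤ z := (CompletePartialOrder.lubOfDirected D hD.2).2 hub
    exact h ⟨hsz, hxz⟩ le_rfl

/-- Strongly Scott open sets are Scott open. -/
lemma StronglyScottOpen.scottOpen {U : Set L} (hU : StronglyScottOpen U)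
    {D : Set L} (hD : DirSet D) (hs : sSup D ∈ U) : (D ∩ U).Nonempty := by
  obtain ⟨a, ha⟩ := hD.1
  have h1 : Ici (sSup D) ∩ Ici a ⊆ U := fun w hw => hU.1 hw.1 hs
  obtain ⟨d, hdD, hd⟩ := hU.2 D hD a h1
  obtain ⟨e, heD, hde, hae⟩ := hD.2 d hdD a ha
  exact ⟨e, heD, hd ⟨hde, hae⟩⟩

/-- In a hypercontinuous dcpo, the strong Scott topology is a C-space for the
upper topology interior. -/
lemma hyper_key (hy : HypercontinuousDomain L) :
    ∀ U : Set L, TopologicalSpace.GenerateOpen {U : Set L | StronglyScottOpen U} U →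
      ∀ x ∈ U, ∃ y ∈ U, x ∈ @interior L (upperTop L) (Ici y) ∧ Ici y ⊆ U := by
  intro U hU
  induction hU with
  | @basic U hU =>
    intro x hx
    obtain ⟨⟨hne, hdir⟩, hlub⟩ := hy x
    have hsup : sSup {y : L | x ∈ @interior L (upperTop L) (Ici y)} = x :=
      (CompletePartialOrder.lubOfDirected _ hdir).unique hlub
    have hs : sSup {y : L | x ∈ @interior L (upperTop L) (Ici y)} ∈ U := by
      rw [hsup]; exact hx
    obtain ⟨e, heD, heU⟩ := hU.scottOpen ⟨hne, hdir⟩ hs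
    exact ⟨e, heU, heD, fun w hw => hU.1 hw heU⟩
  | univ =>
    intro x _
    obtain ⟨y, hyD⟩ := (hy x).1.1
    exact ⟨y, mem_univ _, hyD, subset_univ _⟩
  | @inter U V hU hV ihU ihV =>
    intro x hx
    obtain ⟨y1, hy1U, hy1i, hy1s⟩ := ihU x hx.1
    obtain ⟨y2, hy2U, hy2i, hy2s⟩ := ihV x hx.2
    obtain ⟨y, hyD, h1, h2⟩ := (hy x).1.2 y1 hy1i y2 hy2i
    exact ⟨y, ⟨hy1s h1, hy2s h2⟩, hyD,
      fun w hw => ⟨hy1s (h1.trans hw), hy2s (h2.trans hw)⟩⟩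
  | @sUnion S hS ih =>
    intro x hx
    obtain ⟨T, hT, hxT⟩ := hx
    obtain ⟨y, hyT, hi, hs⟩ := ih T hT x hxT
    exact ⟨y, ⟨T, hT, hyT⟩, hi, hs.trans (subset_sUnion_of_mem hT)⟩

end Aux

theorem hypercontinuous_iff_stronglyContinuous_and_upper_eq_strongScott
    [CompletePartialOrder L] :
    HypercontinuousDomain L ↔
      StronglyContinuousDomain L ∧ upperTop L = strongScott L := by
  constructor
  · intro hy
    have key := hyper_key hy
    have hge : strongScott L ≤ upperTop L := by
      apply le_generateFrom
      rintro s ⟨z, rfl⟩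
      exact TopologicalSpace.GenerateOpen.basic _ (stronglyScottOpen_compl_Iic z)
    have hle : upperTop L ≤ strongScott L := by
      apply le_generateFrom
      intro U hU
      letI := upperTop L
      rw [isOpen_iff_forall_mem_open]
      intro x hx
      obtain ⟨y, _, hyi, hys⟩ := key U (TopologicalSpace.GenerateOpen.basic _ hU) x hx
      exact ⟨interior (Ici y), interior_subset.trans hys, isOpen_interior, hyi⟩
    have heq : upperTop L = strongScott L := le_antisymm hle hge
    refine ⟨?_, heq⟩
    intro U hU x hx
    obtain ⟨y, hyU, hyi, hys⟩ := key U hU x hx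
    exact ⟨y, hyU, heq ▸ hyi, hys⟩
  · rintro ⟨hSC, heq⟩
    intro x
    have hmem : ∀ y : L, x ∈ @interior L (strongScott L) (Ici y) →
        y ∈ {y : L | x ∈ @interior L (upperTop L) (Ici y)} := by
      intro y h
      simp only [mem_setOf_eq, heq]
      rw [heq]; exact h
    have hub : ∀ y ∈ {y : L | x ∈ @interior L (upperTop L) (Ici y)}, y ≤ x := by
      intro y hyD
      exact (@interior_subset L (upperTop L) (Ici y)) hyD
    refine ⟨⟨?_, ?_⟩, ?_, ?_⟩
    · obtain ⟨y, _, hyi, _⟩ := hSC univ (strongScott L).isOpen_univ x (mem_univ x)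
      exact ⟨y, hmem y hyi⟩
    · intro y1 hy1 y2 hy2
      letI := strongScott L
      have hy1' : x ∈ @interior L (strongScott L) (Ici y1) := by
        rw [← heq]; exact hy1
      have hy2' : x ∈ @interior L (strongScott L) (Ici y2) := by
        rw [← heq]; exact hy2
      obtain ⟨y, hyU, hyi, _⟩ := hSC (interior (Ici y1) ∩ interior (Ici y2))
        (isOpen_interior.inter isOpen_interior) x ⟨hy1', hy2'⟩
      exact ⟨y, hmem y hyi, interior_subset hyU.1, interior_subset hyU.2⟩
    · intro y hyD
      exact hub y hyD
    · intro z hz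
      by_contra hxz
      have hop : @IsOpen L (strongScott L) ((Iic z)ᶜ) :=
        TopologicalSpace.GenerateOpen.basic _ (stronglyScottOpen_compl_Iic z)
      obtain ⟨y, hyU, hyi, _⟩ := hSC ((Iic z)ᶜ) hop x hxz
      exact hyU (hz (hmem y hyi))
end

section
/- Let L be the dcpo consisting of a bottom element 0 together with an infinite antichain {a_n : n ∈ ℕ} above 0. Then L is a strongly continuous domain but not a hypercontinuous domain. -/
open Set

variable {L : Type*}

theorem antichain_with_bot_stronglyContinuous_not_hypercontinuous
    [CompletePartialOrder L] (bot : L) (a : ℕ → L)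
    (hbot : ∀ x : L, bot ≤ x)
    (hcover : ∀ x : L, x = bot ∨ ∃ n : ℕ, x = a n)
    (hne : ∀ n : ℕ, a n ≠ bot)
    (hanti : ∀ m n : ℕ, a m ≤ a n → m = n) :
    StronglyContinuousDomain L ∧ ¬ HypercontinuousDomain L := by
  -- `sSup D ∈ D` for every directed set `D`.
  have hsup : ∀ D : Set L, DirSet D → sSup D ∈ D := by
    intro D hD
    have hlub : IsLUB D (sSup D) := CompletePartialOrder.lubOfDirected D hD.2
    by_cases hex : ∃ n, a n ∈ D
    · obtain ⟨n, hn⟩ := hex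
      have hub : a n ∈ upperBounds D := by
        intro d hd
        obtain ⟨z, hz, hdz, hnz⟩ := hD.2 d hd (a n) hn
        rcases hcover z with hzb | ⟨m, hm⟩
        · exact absurd (le_antisymm (hzb ▸ hnz) (hbot _)) (hne n)
        · have hnm := hanti n m (hm ▸ hnz)
          subst hm; rw [hnm]; exact hdz
      have : sSup D = a n := le_antisymm (hlub.2 hub) (hlub.1 hn)
      rw [this]; exact hn
    · push_neg at hex
      have hDb : D ⊆ {bot} := by
        intro d hd
        rcases hcover d with h | ⟨m, hm⟩
        · exact h
        · exact absurd (hm ▸ hd) (hex m)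
      obtain ⟨d, hd⟩ := hD.1
      have hdb : d = bot := hDb hd
      have : sSup D = bot := le_antisymm (hlub.2 (fun x hx => (hDb hx).le.trans (hbot _)))
        (hdb ▸ hlub.1 hd)
      rw [this, ← hdb]; exact hd
  constructor
  · -- strongly continuous
    intro U hU x hx
    refine ⟨x, hx, ?_, ?_⟩
    · -- x ∈ interior (Ici x) in strongScott
      have hopen : @IsOpen _ (strongScott L) (Ici x) := by
        apply TopologicalSpace.GenerateOpen.basic
        refine ⟨isUpperSet_Ici x, ?_⟩
        intro D hD z hz
        exact ⟨sSup D, hsup D hD, hz⟩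
      rw [@IsOpen.interior_eq L (strongScott L) _ hopen]
      exact self_mem_Ici
    · -- U is an upper set
      have hup : ∀ V : Set L, @IsOpen _ (strongScott L) V → IsUpperSet V := by
        intro V hV
        induction hV with
        | basic V hV => exact hV.1
        | univ => exact isUpperSet_univ
        | inter V W _ _ ihV ihW => exact ihV.inter ihW
        | sUnion S hS ih => exact isUpperSet_sUnion fun s hs => ih s hs
      intro z hz
      exact hup U hU hz hx
  · -- not hypercontinuous
    intro H
    obtain ⟨hdir, hlub⟩ := H (a 0)
    -- Every upper-topology open set containing some a k omits only finitely many a m.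
    have hcof : ∀ V : Set L,
        TopologicalSpace.GenerateOpen {U : Set L | ∃ x : L, U = (Iic x)ᶜ} V →
        (∃ k, a k ∈ V) → {m | a m ∉ V}.Finite := by
      intro V hV
      induction hV with
      | basic V hV =>
        intro _
        obtain ⟨z, rfl⟩ := hV
        rcases hcover z with hzb | ⟨n, rfl⟩
        · rw [hzb]
          have : {m | a m ∉ (Iic bot)ᶜ} = ∅ := by
            ext m
            simp only [mem_setOf_eq, mem_compl_iff, not_not, mem_Iic, mem_empty_iff_false,
              iff_false]
            exact fun h => hne m (le_antisymm h (hbot _))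
          rw [this]; exact finite_empty
        · apply Set.Finite.subset (finite_singleton n)
          intro m hm
          simp only [mem_setOf_eq, mem_compl_iff, not_not, mem_Iic] at hm
          exact mem_singleton_iff.mpr (hanti m n hm)
      | univ => intro _; simp
      | inter V W _ _ ihV ihW =>
        rintro ⟨k, hkV, hkW⟩
        have : {m | a m ∉ V ∩ W} ⊆ {m | a m ∉ V} ∪ {m | a m ∉ W} := by
          intro m hm
          by_cases h : a m ∈ V
          · exact Or.inr fun h' => hm ⟨h, h'⟩
          · exact Or.inl h
        exact Set.Finite.subset ((ihV ⟨k, hkV⟩).union (ihW ⟨k, hkW⟩)) this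
      | sUnion S hS ih =>
        rintro ⟨k, hk⟩
        obtain ⟨t, ht, hkt⟩ := hk
        apply Set.Finite.subset (ih t ht ⟨k, hkt⟩)
        intro m hm
        exact fun h => hm ⟨t, ht, h⟩
    -- The set of approximants of a 0 is contained in {bot}.
    have hS : {y : L | a 0 ∈ @interior L (upperTop L) (Ici y)} ⊆ {bot} := by
      intro y hy
      rcases hcover y with rfl | ⟨n, rfl⟩
      · rfl
      · exfalso
        obtain ⟨V, hVsub, hVopen, hV0⟩ := (@mem_interior L (upperTop L) _ _).mp hy
        have hfin := hcof V hVopen ⟨0, hV0⟩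
        have hsub : {n}ᶜ ⊆ {m | a m ∉ V} := by
          intro m hm hmV
          exact hm (mem_singleton_iff.mpr (hanti n m (hVsub hmV)).symm)
        have : ({n}ᶜ : Set ℕ).Finite := hfin.subset hsub
        exact (Set.Finite.infinite_compl (finite_singleton n)) this
    have hub : bot ∈ upperBounds {y : L | a 0 ∈ @interior L (upperTop L) (Ici y)} := by
      intro y hy
      rw [hS hy]
    exact hne 0 (le_antisymm (hlub.2 hub) (hbot _))
end

section
/- For a dcpo L, the closure of a singleton {x} in the strong Scott topology is ↓x; consequently the strong Scott topology is T0 and its specialization order is the order of L. -/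
open Set

variable {L : Type*}

theorem strongScott_closure_singleton [CompletePartialOrder L] :
    (∀ x : L, @closure L (strongScott L) {x} = Iic x) ∧
    (@T0Space L (strongScott L)) ∧
    (∀ x y : L, @Specializes L (strongScott L) x y ↔ y ≤ x) := by
  letI := strongScott L
  have hupper : ∀ U : Set L, IsOpen U → IsUpperSet U := by
    intro U hU
    induction hU with
    | basic V hV => exact hV.1
    | univ => exact isUpperSet_univ
    | inter _ _ _ _ ih1 ih2 => exact ih1.inter ih2
    | sUnion S _ ih => exact isUpperSet_sUnion ih
  have hclosed : ∀ x : L, IsClosed (Iic x) := by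
    intro x
    rw [← isOpen_compl_iff]
    apply TopologicalSpace.GenerateOpen.basic
    refine ⟨(isLowerSet_Iic x).compl, ?_⟩
    intro D hD a hsub
    by_contra h
    push_neg at h
    simp only [Set.not_subset] at h
    have hdx : ∀ d ∈ D, d ≤ x := by
      intro d hd
      obtain ⟨z, hz, hzx⟩ := h d hd
      simp only [mem_compl_iff, mem_Iic, not_not] at hzx
      exact le_trans hz.1 hzx
    have hax : a ≤ x := by
      obtain ⟨d0, hd0⟩ := hD.1
      obtain ⟨z, hz, hzx⟩ := h d0 hd0
      simp only [mem_compl_iff, mem_Iic, not_not] at hzx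
      exact le_trans hz.2 hzx
    have hlub := CompletePartialOrder.lubOfDirected D hD.2
    have hsx : sSup D ≤ x := hlub.2 hdx
    exact hsub ⟨hsx, hax⟩ le_rfl
  have hcl : ∀ x : L, closure {x} = Iic x := by
    intro x
    apply Subset.antisymm
    · exact closure_minimal (by simp) (hclosed x)
    · intro y hy
      rw [mem_closure_iff]
      intro O hO hyO
      exact ⟨x, hupper O hO hy hyO, rfl⟩
  have hspec : ∀ x y : L, Specializes x y ↔ y ≤ x := by
    intro x y
    rw [specializes_iff_mem_closure, hcl x, mem_Iic]
  refine ⟨hcl, ?_, hspec⟩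
  rw [t0Space_iff_inseparable]
  intro x y hxy
  exact le_antisymm ((hspec y x).1 hxy.symm.specializes) ((hspec x y).1 hxy.specializes)
end

section
/- For a dcpo L, every upper set A equals the intersection of all strong Scott open sets containing A. -/
open Set

variable {L : Type*}

theorem upperSet_eq_sInter_strongScott_opens [CompletePartialOrder L]
    (A : Set L) (hA : IsUpperSet A) :
    A = ⋂₀ {U : Set L | @IsOpen _ (strongScott L) U ∧ A ⊆ U} := by
  apply Set.Subset.antisymm
  · intro a ha U hU
    exact hU.2 ha
  · intro x hx
    by_contra hxA
    have hopen : StronglyScottOpen ((Iic x)ᶜ : Set L) := by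
      constructor
      · exact (isLowerSet_Iic x).compl
      · intro D hD y hsub
        by_contra hno
        push_neg at hno
        have hall : ∀ d ∈ D, d ≤ x ∧ y ≤ x := by
          intro d hd
          obtain ⟨z, ⟨hz1, hz2⟩, hz3⟩ := Set.not_subset.mp (hno d hd)
          simp only [mem_compl_iff, mem_Iic, not_not] at hz3
          exact ⟨le_trans hz1 hz3, le_trans hz2 hz3⟩
        obtain ⟨d0, hd0⟩ := hD.1
        have hyx : y ≤ x := (hall d0 hd0).2
        have hlub := CompletePartialOrder.lubOfDirected D hD.2
        have hsx : sSup D ≤ x := hlub.2 (fun d hd => (hall d hd).1)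
        have : x ∈ (Iic x)ᶜ := hsub ⟨hsx, hyx⟩
        exact this le_rfl
    have hU : @IsOpen _ (strongScott L) ((Iic x)ᶜ : Set L) :=
      TopologicalSpace.isOpen_generateFrom_of_mem hopen
    have hAsub : A ⊆ (Iic x)ᶜ := by
      intro a ha hax
      exact hxA (hA hax ha)
    exact hx ((Iic x)ᶜ) ⟨hU, hAsub⟩ le_rfl
end

section
/- For a dcpo L, a strong Scott open set U is a co-prime element of the lattice σ_s(L) if and only if U is a filter (i.e., a strongly Scott open filtered upper set). -/
open Set

variable {L : Type*}

lemma isUpperSet_of_strongScott_open [Preorder L] [SupSet L] (U : Set L)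
    (hU : @IsOpen _ (strongScott L) U) : IsUpperSet U := by
  induction hU with
  | basic V hV => exact hV.1
  | univ => exact isUpperSet_univ
  | inter _ _ _ _ h1 h2 => exact h1.inter h2
  | sUnion S _ hS => exact isUpperSet_sUnion hS

lemma compl_Iic_sso [CompletePartialOrder L] (x : L) :
    StronglyScottOpen ((Iic x)ᶜ : Set L) := by
  constructor
  · intro a b hab ha hb
    exact ha (hab.trans hb)
  · intro D hD a hsub
    by_contra hc
    push_neg at hc
    have key : ∀ d ∈ D, ∃ u, d ≤ u ∧ a ≤ u ∧ u ≤ x := by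
      intro d hd
      obtain ⟨u, hu, hux⟩ := not_subset.1 (hc d hd)
      simp only [mem_compl_iff, mem_Iic, not_not] at hux
      exact ⟨u, hu.1, hu.2, hux⟩
    have hx : x ∈ Ici (sSup D) ∩ Ici a := by
      obtain ⟨d₀, hd₀⟩ := hD.1
      obtain ⟨u0, _, hu0a, hu0x⟩ := key d₀ hd₀
      refine ⟨(CompletePartialOrder.lubOfDirected D hD.2).2 ?_, le_trans hu0a hu0x⟩
      intro d hd
      obtain ⟨v, hdv, _, hvx⟩ := key d hd
      exact le_trans hdv hvx
    exact (hsub hx) (le_refl x)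

theorem strongScott_open_coprime_iff_filter [CompletePartialOrder L]
    (U : Set L) (hU : @IsOpen _ (strongScott L) U) :
    (U.Nonempty ∧ ∀ V W : Set L, @IsOpen _ (strongScott L) V →
        @IsOpen _ (strongScott L) W → U ⊆ V ∪ W → U ⊆ V ∨ U ⊆ W) ↔
    (U.Nonempty ∧ IsUpperSet U ∧
        ∀ x ∈ U, ∀ y ∈ U, ∃ z ∈ U, z ≤ x ∧ z ≤ y) := by
  constructor
  · rintro ⟨hne, hco⟩
    refine ⟨hne, isUpperSet_of_strongScott_open U hU, ?_⟩
    intro x hx y hy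
    by_contra h
    push_neg at h
    have hV : @IsOpen _ (strongScott L) (Iic x)ᶜ :=
      TopologicalSpace.GenerateOpen.basic _ (compl_Iic_sso x)
    have hW : @IsOpen _ (strongScott L) (Iic y)ᶜ :=
      TopologicalSpace.GenerateOpen.basic _ (compl_Iic_sso y)
    have hsub : U ⊆ (Iic x)ᶜ ∪ (Iic y)ᶜ := by
      intro u hu
      by_contra hcon
      simp only [mem_union, mem_compl_iff, mem_Iic, not_or, not_not] at hcon
      exact h u hu hcon.1 hcon.2
    rcases hco _ _ hV hW hsub with h1 | h2
    · exact (h1 hx) (le_refl x)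
    · exact (h2 hy) (le_refl y)
  · rintro ⟨hne, hup, hfil⟩
    refine ⟨hne, ?_⟩
    intro V W hV hW hsub
    by_contra hc
    push_neg at hc
    obtain ⟨u, hu, huV⟩ := not_subset.1 hc.1
    obtain ⟨v, hv, hvW⟩ := not_subset.1 hc.2
    obtain ⟨z, hz, hzu, hzv⟩ := hfil u hu v hv
    rcases hsub hz with h1 | h2
    · exact huV (isUpperSet_of_strongScott_open V hV hzu h1)
    · exact hvW (isUpperSet_of_strongScott_open W hW hzv h2)
end

section
/- Let L be a strongly continuous domain. Then every prime element U ≠ L of the lattice σ_s(L) has the form L \ ↓a for some a ∈ L; consequently (L, σ_s(L)) is a sober space. -/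
open Set

variable {L : Type*}

-- bottom
lemma dcpo_bot_le [CompletePartialOrder L] (x : L) : sSup (∅ : Set L) ≤ x := by
  have h : DirectedOn (· ≤ ·) (∅ : Set L) := by simp [DirectedOn]
  exact h.sSup_le (by simp)

lemma strongScott_isOpen_upper [Preorder L] [SupSet L] {U : Set L}
    (h : @IsOpen _ (strongScott L) U) : IsUpperSet U := by
  induction h with
  | basic _ h => exact h.1
  | univ => exact isUpperSet_univ
  | inter _ _ _ _ h1 h2 => exact h1.inter h2
  | sUnion S _ ih => exact isUpperSet_sUnion ih

lemma strongScott_isOpen_scott [CompletePartialOrder L] {U : Set L}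
    (h : @IsOpen _ (strongScott L) U) : ScottOpen U := by
  induction h with
  | basic V hV =>
    refine ⟨hV.1, fun D hD hs => ?_⟩
    have hsub : Ici (sSup D) ∩ Ici (sSup (∅ : Set L)) ⊆ V := by
      intro z hz
      exact hV.1 hz.1 hs
    obtain ⟨d, hd, hdsub⟩ := hV.2 D hD _ hsub
    exact ⟨d, hd, hdsub ⟨le_refl d, dcpo_bot_le d⟩⟩
  | univ => exact ⟨isUpperSet_univ, fun D hD _ => by simpa using hD.1⟩
  | inter V W _ _ h1 h2 =>
    refine ⟨h1.1.inter h2.1, fun D hD hs => ?_⟩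
    obtain ⟨d1, hd1, hd1V⟩ := h1.2 D hD hs.1
    obtain ⟨d2, hd2, hd2W⟩ := h2.2 D hD hs.2
    obtain ⟨d, hd, hle1, hle2⟩ := hD.2 d1 hd1 d2 hd2
    exact ⟨d, ⟨hd, h1.1 hle1 hd1V, h2.1 hle2 hd2W⟩⟩
  | sUnion S _ ih =>
    refine ⟨isUpperSet_sUnion fun t ht => (ih t ht).1, fun D hD hs => ?_⟩
    obtain ⟨t, ht, hst⟩ := hs
    obtain ⟨d, hd, hdt⟩ := (ih t ht).2 D hD hst
    exact ⟨d, hd, t, ht, hdt⟩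

lemma strongScott_compl_Iic_open [CompletePartialOrder L] (x : L) :
    @IsOpen _ (strongScott L) (Iic x)ᶜ := by
  apply TopologicalSpace.GenerateOpen.basic
  constructor
  · exact (isLowerSet_Iic x).compl
  · intro D hD a hsub
    by_contra hc
    push_neg at hc
    simp only [Set.not_subset, mem_compl_iff, mem_Iic, not_not] at hc
    have hx : sSup D ≤ x := by
      apply hD.2.sSup_le
      intro d hd
      obtain ⟨z, hz, hzc⟩ := hc d hd
      exact le_trans hz.1 hzc
    obtain ⟨d0, hd0⟩ := hD.1
    obtain ⟨z, hz, hzc⟩ := hc d0 hd0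
    have hxa : a ≤ x := le_trans hz.2 hzc
    exact hsub ⟨hx, hxa⟩ (le_refl x)

theorem strongScott_primes_and_sober [CompletePartialOrder L]
    (hL : StronglyContinuousDomain L) :
    (∀ U : Set L, @IsOpen _ (strongScott L) U → U ≠ univ →
        (∀ V W : Set L, @IsOpen _ (strongScott L) V →
          @IsOpen _ (strongScott L) W → V ∩ W ⊆ U → V ⊆ U ∨ W ⊆ U) →
        ∃ a : L, U = (Iic a)ᶜ) ∧
    @T0Space L (strongScott L) ∧ @QuasiSober L (strongScott L) := by
  classical
  letI : TopologicalSpace L := strongScott L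
  have hupper : ∀ U : Set L, IsOpen U → IsUpperSet U :=
    fun U h => strongScott_isOpen_upper h
  have key : ∀ U : Set L, IsOpen U → U ≠ univ →
      (∀ V W : Set L, IsOpen V → IsOpen W → V ∩ W ⊆ U → V ⊆ U ∨ W ⊆ U) →
      ∃ a : L, U = (Iic a)ᶜ := by
    intro U hU hUne hp
    have hAne : Uᶜ.Nonempty := by
      rcases (ne_univ_iff_exists_notMem U).mp hUne with ⟨x, hx⟩
      exact ⟨x, hx⟩
    have hlow : IsLowerSet Uᶜ := (hupper U hU).compl
    set D : Set L := {u : L | (interior (Ici u) ∩ Uᶜ).Nonempty} with hDdef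
    obtain ⟨x0, hx0⟩ := hAne
    obtain ⟨y0, -, hy0i, -⟩ := hL univ isOpen_univ x0 trivial
    have hDne : D.Nonempty := ⟨y0, x0, hy0i, hx0⟩
    have hDdir : DirectedOn (· ≤ ·) D := by
      rintro u ⟨au, haui, hauA⟩ v ⟨av, havi, havA⟩
      have hWopen : IsOpen (interior (Ici u) ∩ interior (Ici v)) :=
        isOpen_interior.inter isOpen_interior
      have hmeet : ∃ a ∈ interior (Ici u) ∩ interior (Ici v), a ∉ U := by
        by_contra hc
        push_neg at hc
        rcases hp _ _ isOpen_interior isOpen_interior (fun a ha => hc a ha) with h | h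
        · exact hauA (h haui)
        · exact havA (h havi)
      obtain ⟨a, haW, haA⟩ := hmeet
      obtain ⟨w, hwW, hawi, hwsub⟩ := hL _ hWopen a haW
      exact ⟨w, ⟨a, hawi, haA⟩, interior_subset hwW.1, interior_subset hwW.2⟩
    have hDA : D ⊆ Uᶜ := by
      rintro u ⟨a, hai, haA⟩
      exact hlow (interior_subset hai : u ≤ a) haA
    have hsA : sSup D ∈ Uᶜ := by
      intro hsU
      obtain ⟨d, hdD, hdU⟩ := (strongScott_isOpen_scott hU).2 D ⟨hDne, hDdir⟩ hsU
      exact hDA hdD hdU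
    have hsub1 : Uᶜ ⊆ Iic (sSup D) := by
      intro a haA
      by_contra hna
      obtain ⟨y, hys, hayi, -⟩ := hL _ (strongScott_compl_Iic_open (sSup D)) a hna
      exact hys (hDdir.le_sSup ⟨a, hayi, haA⟩)
    have hsub2 : Iic (sSup D) ⊆ Uᶜ := fun b hb => hlow hb hsA
    refine ⟨sSup D, ?_⟩
    rw [← compl_compl U, Subset.antisymm hsub1 hsub2]
  have hle : ∀ a b : L, Inseparable a b → a ≤ b := by
    intro a b hab
    by_contra h
    exact ((inseparable_iff_forall_isOpen.mp hab _ (strongScott_compl_Iic_open b)).mp h)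
      (le_refl b)
  have ht0 : T0Space L :=
    (t0Space_iff_inseparable L).mpr fun x y h => le_antisymm (hle x y h) (hle y x h.symm)
  refine ⟨key, ht0, ⟨?_⟩⟩
  intro S hS hScl
  have hUo : IsOpen Sᶜ := hScl.isOpen_compl
  have hUne : Sᶜ ≠ univ := by
    intro h
    obtain ⟨x, hx⟩ := hS.1
    exact (h.symm ▸ mem_univ x : x ∈ Sᶜ) hx
  have hprime : ∀ V W : Set L, IsOpen V → IsOpen W → V ∩ W ⊆ Sᶜ → V ⊆ Sᶜ ∨ W ⊆ Sᶜ := by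
    intro V W hV hW hVW
    by_contra hc
    push_neg at hc
    obtain ⟨hc1, hc2⟩ := hc
    rw [Set.not_subset] at hc1 hc2
    obtain ⟨v, hvV, hvS⟩ := hc1
    obtain ⟨w, hwW, hwS⟩ := hc2
    obtain ⟨z, hzS, hzVW⟩ :=
      hS.2 V W hV hW ⟨v, notMem_compl_iff.mp hvS, hvV⟩ ⟨w, notMem_compl_iff.mp hwS, hwW⟩
    exact hVW hzVW hzS
  obtain ⟨a, ha⟩ := key Sᶜ hUo hUne hprime
  have hSa : S = Iic a := compl_injective ha
  have hclo : closure {a} = Iic a := by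
    apply Subset.antisymm
    · exact closure_minimal (singleton_subset_iff.mpr (mem_Iic.mpr le_rfl))
        (isOpen_compl_iff.mp (strongScott_compl_Iic_open a))
    · intro b hb
      by_contra hbc
      exact hupper _ isClosed_closure.isOpen_compl hb hbc (subset_closure (mem_singleton a))
  exact ⟨a, by rw [IsGenericPoint, hclo, hSa]⟩
end
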